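/- (Theorem 2, approximation guarantee) Let g : (k+1)^𝒳 → ℝ≥0 be a normalized k-submodular function, w : 𝒳 → ℝ>0 a positive weight function, τ > 0 with τ ≤ max_{s∈(k+1)^𝒳} g(s), ε ∈ (0,1), and let v be a k-set of minimum weight among those with g(v) ≥ τ. If g is monotone, the k-set x returned by Algorithm 2 satisfies w(x) ≤ ((3−ε)/(2ε(1−ε)))·w(v) and g(x) ≥ (1−ε)τ/2; if k ≥ 2 and g is not assumed monotone, the k-set x returned by Algorithm 2 satisfies w(x) ≤ ((4−ε)/(3ε(1−ε)))·w(v) and g(x) ≥ (1−ε)τ/3. -/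

import Mathlib

/-- A `k`-set: an assignment of each ground element to one of `k` parts or to none
(`none` meaning the element belongs to no part).  This encodes a tuple
`(S_1, …, S_k)` of pairwise disjoint subsets of `X`. -/
abbrev KSet (X : Type*) (k : ℕ) := X → Option (Fin k)

namespace KSet

variable {X : Type*} {k : ℕ}

/-- The empty `k`-set `𝟎 = (∅, …, ∅)`. -/
def bot (X : Type*) (k : ℕ) : KSet X k := fun _ => none

/-- `le s t` is the partial order `s ⊑ t`, i.e. `Sᵢ ⊆ Tᵢ` for every `i ∈ [k]`. -/
def le (s t : KSet X k) : Prop := ∀ (x : X) (i : Fin k), s x = some i → t x = some i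

/-- The meet `s ⊓ t`, whose `i`-th component is `Sᵢ ∩ Tᵢ`. -/
def meet (s t : KSet X k) : KSet X k := fun x => if s x = t x then s x else none

/-- The join `s ⊔ t`, whose `i`-th component is `(Sᵢ ∪ Tᵢ) \ ⋃_{j ≠ i} (Sⱼ ∪ Tⱼ)`. -/
def join (s t : KSet X k) : KSet X k := fun x =>
  match s x, t x with
  | none, b => b
  | some i, none => some i
  | some i, some j => if i = j then some i else none

/-- The `k`-set `(x, i)` whose only nonempty component is `Sᵢ = {x}`. -/
def single [DecidableEq X] (x : X) (i : Fin k) : KSet X k :=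
  fun y => if y = x then some i else none

/-- `s ⊔ (x, i)`: add the element `x` to the `i`-th part of `s`
(intended for `x ∉ E(s)`). -/
def add [DecidableEq X] (s : KSet X k) (x : X) (i : Fin k) : KSet X k :=
  Function.update s x (some i)

end KSet

/-- The marginal gain `Δ_{x,i} g (s) = g (s ⊔ (x,i)) - g s`. -/
def marg {X : Type*} [DecidableEq X] {k : ℕ} (g : KSet X k → ℝ) (s : KSet X k)
    (x : X) (i : Fin k) : ℝ :=
  g (KSet.add s x i) - g s

/-- `g` is `k`-submodular: `g (s ⊓ t) + g (s ⊔ t) ≤ g s + g t` for all `k`-sets. -/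
def KSubmodular {X : Type*} {k : ℕ} (g : KSet X k → ℝ) : Prop :=
  ∀ s t : KSet X k, g (KSet.meet s t) + g (KSet.join s t) ≤ g s + g t

/-- `g` is monotone with respect to `⊑`. -/
def KMonotone {X : Type*} {k : ℕ} (g : KSet X k → ℝ) : Prop :=
  ∀ s t : KSet X k, KSet.le s t → g s ≤ g t

/-- The weight `w(s) = ∑_{x ∈ E(s)} w x` of a `k`-set. -/
def wtot {X : Type*} [Fintype X] {k : ℕ} (w : X → ℝ) (s : KSet X k) : ℝ :=
  ∑ x ∈ Finset.univ.filter (fun x => s x ≠ none), w x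

/-- A greedy chain for `g`: `c 0 = 𝟎` and each step adds one new element at a
position maximizing the marginal gain over `i ∈ [k]`. -/
def GreedyChain {X : Type*} [DecidableEq X] {k : ℕ} (g : KSet X k → ℝ) (m : ℕ)
    (c : ℕ → KSet X k) : Prop :=
  c 0 = KSet.bot X k ∧
  ∀ p, p < m → ∃ (xp : X) (ip : Fin k),
    c p xp = none ∧
    c (p + 1) = KSet.add (c p) xp ip ∧
    ∀ i : Fin k, marg g (c p) xp i ≤ marg g (c p) xp ip

/-- A choice of position in `[k]` maximizing `f`. -/
noncomputable def argmaxFin {k : ℕ} [NeZero k] (f : Fin k → ℝ) : Fin k :=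
  Classical.choose (Finset.exists_max_image Finset.univ f
    ⟨⟨0, Nat.pos_of_ne_zero (NeZero.ne k)⟩, Finset.mem_univ _⟩)

open Classical in
/-- One step of Algorithm 1, processing the arriving element `x` with current
solution `s`, threshold `τ`, density threshold `θ` and cost upper bound `A`:
if `x` is big (`w x ≤ A` and `max_i g((x,i)) ≥ τ`) then restart from `(x,i')`
with `i'` maximizing `g((x,i))`; otherwise add `(x,i')` with `i'` maximizing the
marginal gain, provided `Δ_{x,i'}g(s)/w(x) ≥ θ` and `w(s) + w(x) ≤ A`. -/
noncomputable def alg1Step {X : Type*} [Fintype X] [DecidableEq X] {k : ℕ} [NeZero k]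
    (g : KSet X k → ℝ) (w : X → ℝ) (τ θ A : ℝ) (s : KSet X k) (x : X) : KSet X k :=
  if w x ≤ A ∧ τ ≤ g (KSet.single x (argmaxFin fun i => g (KSet.single x i))) then
    KSet.single x (argmaxFin fun i => g (KSet.single x i))
  else if θ ≤ marg g s x (argmaxFin fun i => marg g s x i) / w x ∧ wtot w s + w x ≤ A then
    KSet.add s x (argmaxFin fun i => marg g s x i)
  else s

/-- Algorithm 1: starting from `𝟎`, process the elements of the ground set in
their arrival order `order`. -/
noncomputable def alg1 {X : Type*} [Fintype X] [DecidableEq X] {k : ℕ} [NeZero k]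
    (g : KSet X k → ℝ) (w : X → ℝ) (τ θ A : ℝ) (order : List X) : KSet X k :=
  order.foldl (alg1Step g w τ θ A) (KSet.bot X k)

/-- `x` is a big element: `w x ≤ A` and `max_{i ∈ [k]} g((x,i)) ≥ τ`. -/
def IsBig {X : Type*} [DecidableEq X] {k : ℕ} (g : KSet X k → ℝ) (w : X → ℝ)
    (τ A : ℝ) (x : X) : Prop :=
  w x ≤ A ∧ ∃ i : Fin k, τ ≤ g (KSet.single x i)

/-- The `j`-th guess of Algorithm 2: `λ_j = (1-ε)^j · n · w_max`. -/
noncomputable def alg2Guess {X : Type*} [Fintype X] [Nonempty X]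
    (w : X → ℝ) (ε : ℝ) (j : ℕ) : ℝ :=
  (1 - ε) ^ j * (Fintype.card X : ℝ) * Finset.univ.sup' Finset.univ_nonempty w

/-- The bound `l = ln(γ/n) / ln(1-ε)` on guess indices in Algorithm 2, where
`γ = w_min / w_max` and `n = |𝒳|`. -/
noncomputable def alg2Bound {X : Type*} [Fintype X] [Nonempty X]
    (w : X → ℝ) (ε : ℝ) : ℝ :=
  Real.log ((Finset.univ.inf' Finset.univ_nonempty w /
      Finset.univ.sup' Finset.univ_nonempty w) / (Fintype.card X : ℝ)) /
    Real.log (1 - ε)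

/-- The candidate solution `x_j` of Algorithm 2: the output of Algorithm 1 run
with guess `λ_j`, i.e. `θ_j = ετ/λ_j` and `A_j = cA·λ_j` (where `cA = (3-ε)/(2ε)`
if `g` is monotone and `cA = (4-ε)/(3ε)` otherwise). -/
noncomputable def alg2Sol {X : Type*} [Fintype X] [DecidableEq X] [Nonempty X]
    {k : ℕ} [NeZero k] (g : KSet X k → ℝ) (w : X → ℝ) (τ ε cA : ℝ)
    (order : List X) (j : ℕ) : KSet X k :=
  alg1 g w τ (ε * τ / alg2Guess w ε j) (cA * alg2Guess w ε j) order

/-- `x` is a possible output of Algorithm 2 (with `r = 2` if `g` is monotone,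
`r = 3` otherwise): `x` is a minimum-weight member of
`H = {x_j : 0 ≤ j ≤ l, g(x_j) ≥ (1-ε)τ/r}`. -/
def IsAlg2Output {X : Type*} [Fintype X] [DecidableEq X] [Nonempty X]
    {k : ℕ} [NeZero k] (g : KSet X k → ℝ) (w : X → ℝ) (τ ε cA r : ℝ)
    (order : List X) (x : KSet X k) : Prop :=
  ∃ j : ℕ, (j : ℝ) ≤ alg2Bound w ε ∧
    (1 - ε) * τ / r ≤ g (alg2Sol g w τ ε cA order j) ∧
    x = alg2Sol g w τ ε cA order j ∧
    ∀ j' : ℕ, (j' : ℝ) ≤ alg2Bound w ε →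
      (1 - ε) * τ / r ≤ g (alg2Sol g w τ ε cA order j') →
      wtot w x ≤ wtot w (alg2Sol g w τ ε cA order j')

set_option linter.unusedSectionVars false
-- ============ auxiliary lemmas ==============
section AuxStruct
variable {X : Type*} [DecidableEq X] {k : ℕ} {g : KSet X k → ℝ}

lemma KSet.add_self (s : KSet X k) (x : X) (i : Fin k) : (KSet.add s x i) x = some i :=
  Function.update_self _ _ _

lemma KSet.add_ne (s : KSet X k) {x y : X} (h : y ≠ x) (i : Fin k) :
    (KSet.add s x i) y = s y := Function.update_of_ne h _ _

lemma KSet.le_refl (s : KSet X k) : KSet.le s s := fun _ _ h => h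

lemma KSet.le_trans {s t u : KSet X k} (h1 : KSet.le s t) (h2 : KSet.le t u) :
    KSet.le s u := fun x i hx => h2 x i (h1 x i hx)

lemma KSet.le_add {s : KSet X k} {x : X} (hx : s x = none) (i : Fin k) :
    KSet.le s (KSet.add s x i) := by
  intro y j hy
  have hyx : y ≠ x := fun h => by rw [h, hx] at hy; cases hy
  rw [KSet.add_ne s hyx]; exact hy

lemma KSet.le_bot (s : KSet X k) : KSet.le (KSet.bot X k) s := by
  intro y j hy; simp [KSet.bot] at hy

lemma marg_eq (s : KSet X k) (x : X) (i : Fin k) :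
    g (KSet.add s x i) = g s + marg g s x i := by
  simp [marg]

lemma le_none {s t : KSet X k} (hst : KSet.le s t) {x : X} (hx : t x = none) :
    s x = none := by
  cases hs : s x with
  | none => rfl
  | some j => rw [hst x j hs] at hx; cases hx

/-- Orthant submodularity. -/
lemma marg_antitone (hsub : KSubmodular g) {s t : KSet X k}
    (hst : KSet.le s t) {x : X} (hx : t x = none) (i : Fin k) :
    marg g t x i ≤ marg g s x i := by
  have hsx : s x = none := le_none hst hx
  have hmeet : KSet.meet (KSet.add s x i) t = s := by
    funext y
    by_cases hy : y = x
    · subst hy; simp [KSet.meet, KSet.add_self, hx, hsx]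
    · rw [show (KSet.meet (KSet.add s x i) t) y =
        (if s y = t y then s y else none) by simp [KSet.meet, KSet.add_ne s hy]]
      cases hs : s y with
      | none =>
        cases ht : t y with
        | none => simp
        | some j => simp
      | some j => simp [hst y j hs]
  have hjoin : KSet.join (KSet.add s x i) t = KSet.add t x i := by
    funext y
    by_cases hy : y = x
    · subst hy; simp [KSet.join, KSet.add_self, hx]
    · rw [KSet.add_ne t hy]
      cases hs : s y with
      | none => simp [KSet.join, KSet.add_ne s hy, hs]
      | some j => simp [KSet.join, KSet.add_ne s hy, hs, hst y j hs]
  have h := hsub (KSet.add s x i) t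
  rw [hmeet, hjoin] at h
  simp only [marg]
  linarith

/-- Pairwise monotonicity. -/
lemma marg_pairwise (hsub : KSubmodular g) {s : KSet X k} {x : X}
    (hx : s x = none) {i j : Fin k} (hij : i ≠ j) :
    0 ≤ marg g s x i + marg g s x j := by
  have hmeet : KSet.meet (KSet.add s x i) (KSet.add s x j) = s := by
    funext y
    by_cases hy : y = x
    · subst hy; simp [KSet.meet, KSet.add_self, hx, hij]
    · simp [KSet.meet, KSet.add_ne s hy]
  have hjoin : KSet.join (KSet.add s x i) (KSet.add s x j) = s := by
    funext y
    by_cases hy : y = x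
    · subst hy; simp [KSet.join, KSet.add_self, hx, hij]
    · cases hs : s y with
      | none => simp [KSet.join, KSet.add_ne s hy, hs]
      | some j' => simp [KSet.join, KSet.add_ne s hy, hs]
  have h := hsub (KSet.add s x i) (KSet.add s x j)
  rw [hmeet, hjoin] at h
  simp only [marg]
  linarith

lemma marg_nonneg_of_monotone (hmono : KMonotone g) {s : KSet X k} {x : X}
    (hx : s x = none) (i : Fin k) : 0 ≤ marg g s x i := by
  have := hmono s (KSet.add s x i) (KSet.le_add hx i)
  simp only [marg]; linarith

end AuxStruct
set_option linter.unusedSectionVars false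

section AuxWtot
variable {X : Type*} [Fintype X] [DecidableEq X] {k : ℕ} {w : X → ℝ}

lemma wtot_nonneg (hw : ∀ x, 0 ≤ w x) (s : KSet X k) : 0 ≤ wtot w s :=
  Finset.sum_nonneg fun x _ => hw x

lemma wtot_bot : wtot w (KSet.bot X k) = 0 := by
  simp [wtot, KSet.bot]

lemma wtot_single (x : X) (i : Fin k) : wtot w (KSet.single x i) = w x := by
  have h : Finset.univ.filter (fun y => KSet.single x i y ≠ none) = {x} := by
    ext y; by_cases hy : y = x <;> simp [KSet.single, hy]
  rw [wtot, h, Finset.sum_singleton]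

lemma wtot_add_of_none {s : KSet X k} {x : X} (h : s x = none) (i : Fin k) :
    wtot w (KSet.add s x i) = w x + wtot w s := by
  have hfil : Finset.univ.filter (fun y => KSet.add s x i y ≠ none) =
      insert x (Finset.univ.filter (fun y => s y ≠ none)) := by
    ext y
    by_cases hy : y = x
    · subst hy; simp [KSet.add_self]
    · simp [KSet.add_ne s hy, hy]
  rw [wtot, hfil, Finset.sum_insert (by simp [h]), wtot]

lemma wtot_add_le (hw : ∀ x, 0 ≤ w x) (s : KSet X k) (x : X) (i : Fin k) :
    wtot w (KSet.add s x i) ≤ w x + wtot w s := by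
  cases hs : s x with
  | none => rw [wtot_add_of_none hs]
  | some j =>
    have hfil : Finset.univ.filter (fun y => KSet.add s x i y ≠ none) =
        Finset.univ.filter (fun y => s y ≠ none) := by
      ext y
      by_cases hy : y = x
      · subst hy; simp [KSet.add_self, hs]
      · simp [KSet.add_ne s hy]
    rw [wtot, hfil, ← wtot]
    linarith [hw x]

lemma single_le_wtot (hw : ∀ x, 0 ≤ w x) {s : KSet X k} {x : X} (hx : s x ≠ none) :
    w x ≤ wtot w s :=
  Finset.single_le_sum (fun y _ => hw y) (by simp [hx])

end AuxWtot

section AuxGreedy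
variable {X : Type*} [DecidableEq X] {k : ℕ}

/-- `GreedyRun g s t`: `t` is reachable from `s` by repeatedly adding a fresh
element at a position maximizing the marginal gain. -/
inductive GreedyRun (g : KSet X k → ℝ) : KSet X k → KSet X k → Prop
  | refl (s : KSet X k) : GreedyRun g s s
  | add {s t : KSet X k} {x : X} {i : Fin k} (hx : s x = none)
      (hmax : ∀ i', marg g s x i' ≤ marg g s x i)
      (h : GreedyRun g (KSet.add s x i) t) : GreedyRun g s t

lemma GreedyRun.le {g : KSet X k → ℝ} {s t : KSet X k} (h : GreedyRun g s t) :
    KSet.le s t := by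
  induction h with
  | refl s => exact KSet.le_refl s
  | add hx hmax h ih => exact KSet.le_trans (KSet.le_add hx _) ih

lemma GreedyRun.wtot_le {g : KSet X k → ℝ} [Fintype X] {w : X → ℝ}
    (hw : ∀ x, 0 ≤ w x) {s t : KSet X k} (h : GreedyRun g s t) :
    wtot w s ≤ wtot w t := by
  induction h with
  | refl s => exact le_refl _
  | add hx hmax h ih =>
    rename_i s' t' x i
    rw [wtot_add_of_none hx] at ih
    linarith [hw x]

/-- Override: `ovr t o` keeps all assignments of `t` and completes them by `o`. -/
def KSet.ovr (t o : KSet X k) : KSet X k := fun y => if t y = none then o y else t y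

lemma KSet.le_ovr (t o : KSet X k) : KSet.le t (KSet.ovr t o) := by
  intro y j hy; simp [KSet.ovr, hy]

lemma KSet.ovr_of_le {s o : KSet X k} (h : KSet.le s o) : KSet.ovr s o = o := by
  funext y
  cases hs : s y with
  | none => simp [KSet.ovr, hs]
  | some j => simp [KSet.ovr, hs, (h y j hs).symm]

/-- The one-step exchange bound. -/
lemma stepA {g : KSet X k → ℝ} (hsub : KSubmodular g) {ρ : ℝ}
    (hd : (KMonotone g ∧ ρ = 1) ∨ (2 ≤ k ∧ ρ = 2))
    {s o : KSet X k} (hso : KSet.le s o) {x : X} {i : Fin k}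
    (hx : s x = none) (hmax : ∀ i', marg g s x i' ≤ marg g s x i) :
    g o - g (Function.update o x (some i)) ≤ ρ * marg g s x i := by
  have hF1 : 0 ≤ marg g s x i := by
    rcases hd with ⟨hmono, _⟩ | ⟨hk, _⟩
    · exact marg_nonneg_of_monotone hmono hx i
    · have hnt : Nontrivial (Fin k) := Fin.nontrivial_iff_two_le.mpr hk
      obtain ⟨i'', hi''⟩ := exists_ne i
      have h1 := marg_pairwise hsub hx (Ne.symm hi'')
      have h2 := hmax i''
      linarith
  rcases ho : o x with _ | j
  · -- o x = none
    have hupd : Function.update o x (some i) = KSet.add o x i := rfl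
    rw [hupd, marg_eq (g := g) o x i]
    rcases hd with ⟨hmono, hρ⟩ | ⟨hk, hρ⟩
    · have := marg_nonneg_of_monotone hmono ho i
      rw [hρ]; linarith
    · have hnt : Nontrivial (Fin k) := Fin.nontrivial_iff_two_le.mpr hk
      obtain ⟨i'', hi''⟩ := exists_ne i
      have h1 := marg_pairwise hsub ho (Ne.symm hi'')
      have h2 : marg g o x i'' ≤ marg g s x i'' := marg_antitone hsub hso ho i''
      have h3 := hmax i''
      rw [hρ]; linarith
  · by_cases hji : j = i
    · subst hji
      have hupd : Function.update o x (some j) = o := by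
        funext y
        by_cases hy : y = x
        · subst hy; simp [ho]
        · simp [Function.update_of_ne hy]
      rw [hupd]
      rcases hd with ⟨_, hρ⟩ | ⟨_, hρ⟩ <;> rw [hρ] <;> linarith
    · -- o x = some j, j ≠ i
      set a : KSet X k := Function.update o x none with ha
      have hax : a x = none := Function.update_self _ _ _
      have hoa : o = KSet.add a x j := by
        funext y
        by_cases hy : y = x
        · subst hy; rw [KSet.add_self, ho]
        · rw [KSet.add_ne a hy, ha, Function.update_of_ne hy]
      have hupd : Function.update o x (some i) = KSet.add a x i := by
        funext y
        by_cases hy : y = x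
        · subst hy; rw [KSet.add_self, Function.update_self]
        · rw [KSet.add_ne a hy, Function.update_of_ne hy, ha, Function.update_of_ne hy]
      have hsa : KSet.le s a := by
        intro y j' hy
        have hyx : y ≠ x := fun h => by rw [h, hx] at hy; cases hy
        rw [ha, Function.update_of_ne hyx]; exact hso y j' hy
      have hLHS : g o - g (Function.update o x (some i)) = marg g a x j - marg g a x i := by
        rw [hupd]; conv_lhs => rw [hoa]
        simp [marg]
      rw [hLHS]
      have h2 : marg g a x j ≤ marg g s x j := marg_antitone hsub hsa hax j
      have h3 := hmax j
      rcases hd with ⟨hmono, hρ⟩ | ⟨_, hρ⟩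
      · have h4 := marg_nonneg_of_monotone hmono hax i
        rw [hρ]; linarith
      · have h4 := marg_pairwise hsub hax (Ne.symm hji)
        rw [hρ]; linarith

/-- Telescoping bound (Lemma A). -/
lemma lemmaA {g : KSet X k → ℝ} (hsub : KSubmodular g) {ρ : ℝ}
    (hd : (KMonotone g ∧ ρ = 1) ∨ (2 ≤ k ∧ ρ = 2))
    {s t : KSet X k} (hG : GreedyRun g s t) :
    ∀ o : KSet X k, KSet.le s o → g o + ρ * g s ≤ ρ * g t + g (KSet.ovr t o) := by
  induction hG with
  | refl s =>
    intro o hso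
    rw [KSet.ovr_of_le hso]; linarith
  | add hx hmax hG ih =>
    rename_i s t x i
    intro o hso
    have hstep := stepA hsub hd hso hx hmax
    have hle1 : KSet.le (KSet.add s x i) (Function.update o x (some i)) := by
      intro y j hy
      by_cases hyx : y = x
      · subst hyx
        rw [KSet.add_self] at hy
        rw [Function.update_self, hy]
      · rw [KSet.add_ne s hyx] at hy
        rw [Function.update_of_ne hyx]
        exact hso y j hy
    have hih := ih (Function.update o x (some i)) hle1
    have hovr : KSet.ovr t (Function.update o x (some i)) = KSet.ovr t o := by
      funext y
      by_cases hyx : y = x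
      · subst hyx
        have : t y = some i := hG.le y i (KSet.add_self s y i)
        simp [KSet.ovr, this]
      · simp [KSet.ovr, Function.update_of_ne hyx]
    rw [hovr] at hih
    have hg : g (KSet.add s x i) = g s + marg g s x i := marg_eq s x i
    rw [hg] at hih
    linarith

/-- Extension of `t` by `o` on `D`, used for Lemma B. -/
noncomputable def extD (t o : KSet X k) (D : Finset X) : KSet X k :=
  fun y => if y ∈ D ∧ t y = none then o y else t y

lemma extD_empty (t o : KSet X k) : extD t o ∅ = t := by
  funext y; simp [extD]

lemma extD_univ [Fintype X] (t o : KSet X k) : extD t o Finset.univ = KSet.ovr t o := by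
  funext y; simp [extD, KSet.ovr]

/-- Lemma B: adding leftover elements of `o` to `t` costs at most the marginals at `t`. -/
lemma lemmaB {g : KSet X k → ℝ} (hsub : KSubmodular g) (t o : KSet X k) (c : X → ℝ)
    (hc0 : ∀ x, 0 ≤ c x)
    (hm : ∀ x i, t x = none → o x = some i → marg g t x i ≤ c x) :
    ∀ D : Finset X, g (extD t o D) ≤ g t + ∑ x ∈ D, c x := by
  intro D
  induction D using Finset.induction_on with
  | empty => rw [extD_empty]; simp
  | insert a D ha ih =>
    rw [Finset.sum_insert ha]
    have hsub' : ∀ y, y ≠ a → extD t o (insert a D) y = extD t o D y := by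
      intro y hy
      simp [extD, Finset.mem_insert, hy]
    rcases hta : t a with _ | j
    · rcases hoa : o a with _ | i
      · have : extD t o (insert a D) = extD t o D := by
          funext y
          by_cases hy : y = a
          · subst hy; simp [extD, hta, hoa, ha]
          · exact hsub' y hy
        rw [this]; linarith [hc0 a]
      · have heq : extD t o (insert a D) = KSet.add (extD t o D) a i := by
          funext y
          by_cases hy : y = a
          · subst hy
            rw [KSet.add_self]
            simp [extD, hta, hoa]
          · rw [KSet.add_ne _ hy]; exact hsub' y hy
        have hteD : KSet.le t (extD t o D) := by
          intro y j' hy; simp [extD, hy]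
        have heDa : extD t o D a = none := by simp [extD, ha, hta]
        have h1 : marg g (extD t o D) a i ≤ marg g t a i :=
          marg_antitone hsub hteD heDa i
        have h2 := hm a i hta hoa
        rw [heq, marg_eq (g := g)]
        linarith
    · have : extD t o (insert a D) = extD t o D := by
        funext y
        by_cases hy : y = a
        · subst hy; simp [extD, hta, ha]
        · exact hsub' y hy
      rw [this]; linarith [hc0 a]

end AuxGreedy
section AuxAlg
variable {X : Type*} [Fintype X] [DecidableEq X] {k : ℕ} [NeZero k]
variable {g : KSet X k → ℝ} {w : X → ℝ} {τ θ A : ℝ}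

lemma argmaxFin_spec (f : Fin k → ℝ) (i : Fin k) : f i ≤ f (argmaxFin f) := by
  have h := Classical.choose_spec (Finset.exists_max_image Finset.univ f
    ⟨⟨0, Nat.pos_of_ne_zero (NeZero.ne k)⟩, Finset.mem_univ _⟩)
  exact h.2 i (Finset.mem_univ i)

lemma foldl_inv {α β : Type*} (f : α → β → α) (P : α → Prop) :
    ∀ (L : List β) (s : α), (∀ s' x, x ∈ L → P s' → P (f s' x)) → P s → P (L.foldl f s) := by
  intro L
  induction L with
  | nil => intro s _ h; exact h
  | cons a L ih =>
    intro s hpres hs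
    rw [List.foldl_cons]
    exact ih (f s a) (fun s' x hx => hpres s' x (List.mem_cons_of_mem a hx))
      (hpres s a List.mem_cons_self hs)

lemma foldl_big {α β : Type*} (f : α → β → α) (P : α → Prop) (x : β) :
    ∀ (L : List β) (s : α), x ∈ L → (∀ s', P (f s' x)) →
      (∀ s' y, y ∈ L → P s' → P (f s' y)) → P (L.foldl f s) := by
  intro L
  induction L with
  | nil => intro s hx; exact absurd hx List.not_mem_nil
  | cons a L ih =>
    intro s hx hinst hpres
    rw [List.foldl_cons]
    rcases List.mem_cons.mp hx with rfl | hx'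
    · exact foldl_inv f P L (f s x)
        (fun s' y hy => hpres s' y (List.mem_cons_of_mem x hy)) (hinst s)
    · exact ih (f s a) hx' hinst (fun s' y hy => hpres s' y (List.mem_cons_of_mem a hy))

/-- Step preserves `τ ≤ g ·`. -/
lemma alg1Step_preserves_tau (hw : ∀ x, 0 < w x) (hθ : 0 < θ)
    (s : KSet X k) (x : X) (h : τ ≤ g s) : τ ≤ g (alg1Step g w τ θ A s x) := by
  simp only [alg1Step]
  split_ifs with h1 h2
  · exact h1.2
  · rw [marg_eq (g := g)]
    have hm : θ * w x ≤ marg g s x (argmaxFin fun i => marg g s x i) :=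
      (le_div_iff₀ (hw x)).mp h2.1
    nlinarith [hw x]
  · exact h

/-- A big element forces value at least `τ`. -/
lemma alg1Step_big (hbig : IsBig g w τ A x) (s : KSet X k) :
    τ ≤ g (alg1Step g w τ θ A s x) := by
  obtain ⟨hwx, i, hi⟩ := hbig
  have h1 : τ ≤ g (KSet.single x (argmaxFin fun i => g (KSet.single x i))) :=
    le_trans hi (argmaxFin_spec (fun i => g (KSet.single x i)) i)
  simp only [alg1Step]
  rw [if_pos ⟨hwx, h1⟩]
  exact h1

/-- Step preserves the weight bound. -/
lemma alg1Step_weight (hw : ∀ x, 0 < w x)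
    (s : KSet X k) (x : X) (h : wtot w s ≤ A) : wtot w (alg1Step g w τ θ A s x) ≤ A := by
  simp only [alg1Step]
  split_ifs with h1 h2
  · rw [wtot_single]; exact h1.1
  · calc wtot w (KSet.add s x _) ≤ w x + wtot w s := wtot_add_le (fun y => (hw y).le) s x _
      _ ≤ A := by linarith [h2.2]
  · exact h

/-- Master lemma for a run with no big elements. -/
lemma master_nobig (hsub : KSubmodular g) (hw : ∀ x, 0 < w x) (hθ : 0 < θ) :
    ∀ (L : List X) (s : KSet X k), L.Nodup →
      (∀ x ∈ L, ¬ IsBig g w τ A x) → (∀ x ∈ L, s x = none) →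
      θ * wtot w s ≤ g s →
      GreedyRun g s (L.foldl (alg1Step g w τ θ A) s) ∧
      θ * wtot w (L.foldl (alg1Step g w τ θ A) s) ≤ g (L.foldl (alg1Step g w τ θ A) s) ∧
      ∀ x ∈ L, (L.foldl (alg1Step g w τ θ A) s) x ≠ none ∨
        ((∀ i, marg g (L.foldl (alg1Step g w τ θ A) s) x i < θ * w x) ∨
          A < wtot w (L.foldl (alg1Step g w τ θ A) s) + w x) := by
  intro L
  induction L with
  | nil =>
    intro s _ _ _ hinv
    exact ⟨GreedyRun.refl s, hinv, by simp⟩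
  | cons a L ih =>
    intro s hnd hnb hs hinv
    obtain ⟨haL, hndL⟩ := List.nodup_cons.mp hnd
    have hnbig := hnb a List.mem_cons_self
    have hsa := hs a List.mem_cons_self
    rw [List.foldl_cons]
    simp only [alg1Step]
    split_ifs with h1 h2
    · exact absurd ⟨h1.1, _, h1.2⟩ hnbig
    · -- accept
      set i' := argmaxFin fun i => marg g s a i with hi'
      have hmarg : θ * w a ≤ marg g s a i' := (le_div_iff₀ (hw a)).mp h2.1
      have hpre1 : ∀ x ∈ L, (KSet.add s a i') x = none := by
        intro x hx
        have hxa : x ≠ a := fun h => haL (h ▸ hx)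
        rw [KSet.add_ne s hxa]; exact hs x (List.mem_cons_of_mem a hx)
      have hpre2 : θ * wtot w (KSet.add s a i') ≤ g (KSet.add s a i') := by
        rw [wtot_add_of_none hsa, marg_eq (g := g)]
        nlinarith [hw a]
      obtain ⟨hG, hinv', hprop⟩ := ih (KSet.add s a i') hndL
        (fun x hx => hnb x (List.mem_cons_of_mem a hx)) hpre1 hpre2
      refine ⟨GreedyRun.add hsa (fun i'' => argmaxFin_spec _ i'') hG, hinv', ?_⟩
      intro x hx
      rcases List.mem_cons.mp hx with rfl | hx'
      · left
        have := hG.le x i' (KSet.add_self s x i')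
        simp [this]
      · exact hprop x hx'
    · -- reject
      obtain ⟨hG, hinv', hprop⟩ := ih s hndL
        (fun x hx => hnb x (List.mem_cons_of_mem a hx))
        (fun x hx => hs x (List.mem_cons_of_mem a hx)) hinv
      refine ⟨hG, hinv', ?_⟩
      intro x hx
      rcases List.mem_cons.mp hx with rfl | hx'
      · by_cases ht : (L.foldl (alg1Step g w τ θ A) s) x = none
        · rcases not_and_or.mp h2 with hd | hcap
          · right; left
            intro i
            have h1' : marg g s x (argmaxFin fun i => marg g s x i) < θ * w x :=
              (div_lt_iff₀ (hw x)).mp (lt_of_not_ge hd)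
            exact lt_of_le_of_lt (le_trans (marg_antitone hsub hG.le ht i)
              (argmaxFin_spec (fun i => marg g s x i) i)) h1'
          · right; right
            have hc := lt_of_not_ge hcap
            have hwt := hG.wtot_le (fun y => (hw y).le)
            linarith
        · left; exact ht
      · exact hprop x hx'

end AuxAlg
section AuxAlg2
variable {X : Type*} [Fintype X] [DecidableEq X] {k : ℕ} [NeZero k]
variable {g : KSet X k → ℝ} {w : X → ℝ}

/-- Weight bound for the output of Algorithm 1. -/
lemma alg1_weight_le (hw : ∀ x, 0 < w x) {τ θ A : ℝ} (hA : 0 ≤ A) (order : List X) :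
    wtot w (alg1 g w τ θ A order) ≤ A := by
  refine foldl_inv (alg1Step g w τ θ A) (fun s => wtot w s ≤ A) order (KSet.bot X k)
    (fun s' x _ h => alg1Step_weight hw s' x h) ?_
  show wtot w (KSet.bot X k) ≤ A
  rw [wtot_bot]; exact hA

/-- Value guarantee for Algorithm 1 with a good guess `lam ≥ w(v)`. -/
lemma alg1_value (hsub : KSubmodular g)
    (hnorm : g (KSet.bot X k) = 0)
    (hw : ∀ x, 0 < w x) {τ ε : ℝ} (hτ : 0 < τ) (hε0 : 0 < ε) (hε1 : ε < 1)
    {r cA : ℝ}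
    (hps : (KMonotone g ∧ r = 2 ∧ cA = (3 - ε) / (2 * ε)) ∨
           (2 ≤ k ∧ r = 3 ∧ cA = (4 - ε) / (3 * ε)))
    (v : KSet X k) (hgv : τ ≤ g v)
    (order : List X) (hnd : order.Nodup) (hfull : ∀ x, x ∈ order)
    (lam : ℝ) (hlam0 : 0 < lam) (hvlam : wtot w v ≤ lam) :
    (1 - ε) * τ / r ≤ g (alg1 g w τ (ε * τ / lam) (cA * lam) order) := by
  have hθ : 0 < ε * τ / lam := by positivity
  have hr2 : 2 ≤ r := by rcases hps with ⟨_, hr, _⟩ | ⟨_, hr, _⟩ <;> rw [hr] <;> norm_num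
  have hr0 : 0 < r := by linarith
  have hcA1 : 1 ≤ cA := by
    rcases hps with ⟨_, _, hcA⟩ | ⟨_, _, hcA⟩ <;> rw [hcA] <;>
      rw [le_div_iff₀ (by linarith)] <;> linarith
  set θ := ε * τ / lam with hθdef
  set A := cA * lam with hAdef
  have hAlam : lam ≤ A := by rw [hAdef]; nlinarith
  have h4 : (1 - ε) * τ / r ≤ ε * τ * (cA - 1) := by
    have hnne : 0 ≤ (1 - ε) * τ := mul_nonneg (by linarith) hτ.le
    rcases hps with ⟨_, hr, hcA⟩ | ⟨_, hr, hcA⟩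
    · rw [hr, hcA]
      have he : ε * τ * ((3 - ε) / (2 * ε) - 1) = 3 * ((1 - ε) * τ) / 2 := by
        field_simp; ring
      rw [he]; linarith
    · rw [hr, hcA]
      have he : ε * τ * ((4 - ε) / (3 * ε) - 1) = 4 * ((1 - ε) * τ) / 3 := by
        field_simp; ring
      rw [he]; linarith
  by_cases hbig : ∃ x ∈ order, IsBig g w τ A x
  · obtain ⟨x, hxo, hbx⟩ := hbig
    have hfin : τ ≤ g (alg1 g w τ θ A order) :=
      foldl_big (alg1Step g w τ θ A) (fun s => τ ≤ g s) x order (KSet.bot X k) hxo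
        (fun s' => alg1Step_big hbx s')
        (fun s' y _ h => alg1Step_preserves_tau hw hθ s' y h)
    rw [div_le_iff₀ hr0]
    nlinarith
  · push_neg at hbig
    obtain ⟨hG, hinv, hprop⟩ := master_nobig hsub hw hθ order (KSet.bot X k) hnd
      (fun x hx => hbig x hx) (fun x _ => rfl)
      (by rw [wtot_bot, hnorm]; simp)
    set t := order.foldl (alg1Step g w τ θ A) (KSet.bot X k) with htdef
    have htg : alg1 g w τ θ A order = t := rfl
    rw [htg]
    by_cases hcap : ∃ x, v x ≠ none ∧ t x = none ∧ A < wtot w t + w x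
    · -- capacity rejection happened
      obtain ⟨x, hvx, htx, hAx⟩ := hcap
      have hwx : w x ≤ wtot w v := single_le_wtot (fun y => (hw y).le) hvx
      have h1 : A - lam ≤ wtot w t := by linarith
      have h2 : θ * (A - lam) ≤ θ * wtot w t := mul_le_mul_of_nonneg_left h1 hθ.le
      have h3 : θ * (A - lam) = ε * τ * (cA - 1) := by
        rw [hθdef, hAdef]; field_simp
      linarith
    · -- all relevant rejections are density rejections
      push_neg at hcap
      have hdens : ∀ x, v x ≠ none → t x = none → ∀ i, marg g t x i < θ * w x := by
        intro x hvx htx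
        rcases hprop x (hfull x) with h | h | h
        · exact absurd htx h
        · exact h
        · exact absurd h (not_lt.mpr (hcap x hvx htx))
      have hρ : (KMonotone g ∧ r - 1 = 1) ∨ (2 ≤ k ∧ r - 1 = 2) := by
        rcases hps with ⟨hm, hr, _⟩ | ⟨hk, hr, _⟩
        · exact Or.inl ⟨hm, by rw [hr]; norm_num⟩
        · exact Or.inr ⟨hk, by rw [hr]; norm_num⟩
      have hA1 := lemmaA hsub hρ hG v (KSet.le_bot v)
      rw [hnorm, ← extD_univ] at hA1
      have hB := lemmaB hsub t v
        (fun x => if v x ≠ none ∧ t x = none then θ * w x else 0)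
        (fun x => by
          split_ifs with h
          · exact mul_nonneg hθ.le (hw x).le
          · exact le_refl 0)
        (fun x i htx hvx => by
          rw [if_pos ⟨by simp [hvx], htx⟩]
          exact (hdens x (by simp [hvx]) htx i).le)
        Finset.univ
      have hsum : (∑ x ∈ Finset.univ,
          if v x ≠ none ∧ t x = none then θ * w x else 0) ≤ θ * wtot w v := by
        rw [← Finset.sum_filter, wtot, Finset.mul_sum]
        apply Finset.sum_le_sum_of_subset_of_nonneg
        · intro x hx
          simp only [Finset.mem_filter, Finset.mem_univ, true_and] at hx ⊢
          exact hx.1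
        · intro x _ _
          exact mul_nonneg hθ.le (hw x).le
      have hθlam : θ * lam = ε * τ := by rw [hθdef]; field_simp
      have h5 : θ * wtot w v ≤ ε * τ := by
        rw [← hθlam]; exact mul_le_mul_of_nonneg_left hvlam hθ.le
      have hring : (r - 1) * g t + g t = g t * r := by ring
      rw [div_le_iff₀ hr0]
      linarith

end AuxAlg2
section AuxMain
variable {X : Type*} [Fintype X] [DecidableEq X] [Nonempty X] {k : ℕ} [NeZero k]
variable {g : KSet X k → ℝ} {w : X → ℝ}

/-- The master correctness lemma for Algorithm 2, parametric in `(r, cA)`. -/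
lemma alg2_main (hsub : KSubmodular g) (hnorm : g (KSet.bot X k) = 0)
    (hw : ∀ x, 0 < w x) {τ ε : ℝ} (hτ : 0 < τ) (hε0 : 0 < ε) (hε1 : ε < 1)
    {r cA : ℝ}
    (hps : (KMonotone g ∧ r = 2 ∧ cA = (3 - ε) / (2 * ε)) ∨
           (2 ≤ k ∧ r = 3 ∧ cA = (4 - ε) / (3 * ε)))
    (v : KSet X k) (hgv : τ ≤ g v)
    (order : List X) (hnd : order.Nodup) (hfull : ∀ x, x ∈ order) :
    (∃ x : KSet X k, IsAlg2Output g w τ ε cA r order x) ∧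
    ∀ x : KSet X k, IsAlg2Output g w τ ε cA r order x →
      wtot w x ≤ cA / (1 - ε) * wtot w v ∧ (1 - ε) * τ / r ≤ g x := by
  classical
  have hcA0 : 0 < cA := by
    rcases hps with ⟨_, _, hcA⟩ | ⟨_, _, hcA⟩ <;> rw [hcA] <;> apply div_pos <;> linarith
  set wmax := Finset.univ.sup' Finset.univ_nonempty w with hwmaxdef
  set wmin := Finset.univ.inf' Finset.univ_nonempty w with hwmindef
  have hwmax : 0 < wmax := by
    obtain ⟨x0⟩ := (inferInstance : Nonempty X)
    exact lt_of_lt_of_le (hw x0) (Finset.le_sup' w (Finset.mem_univ x0))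
  have hwmin : 0 < wmin := by
    obtain ⟨x0, hx0, he⟩ := Finset.exists_mem_eq_inf' Finset.univ_nonempty w
    rw [hwmindef, he]; exact hw x0
  have hn1 : (1 : ℝ) ≤ (Fintype.card X : ℝ) := by
    exact_mod_cast Fintype.card_pos
  -- v is nonempty
  have hvne : ∃ x₀, v x₀ ≠ none := by
    by_contra h
    push_neg at h
    have : v = KSet.bot X k := by funext y; rw [h y]; rfl
    rw [this, hnorm] at hgv; linarith
  obtain ⟨x₀, hx₀⟩ := hvne
  have hwv_pos : 0 < wtot w v := lt_of_lt_of_le (hw x₀) (single_le_wtot (fun y => (hw y).le) hx₀)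
  have hwv_min : wmin ≤ wtot w v :=
    le_trans (Finset.inf'_le w (Finset.mem_univ x₀)) (single_le_wtot (fun y => (hw y).le) hx₀)
  have hlam0 : ∀ j, 0 < alg2Guess w ε j := by
    intro j
    rw [alg2Guess]
    have : (0:ℝ) < 1 - ε := by linarith
    positivity
  have hlam_succ : ∀ j, alg2Guess w ε (j+1) = (1 - ε) * alg2Guess w ε j := by
    intro j; rw [alg2Guess, alg2Guess, pow_succ]; ring
  have hwv_le0 : wtot w v ≤ alg2Guess w ε 0 := by
    rw [alg2Guess, pow_zero, one_mul]
    calc wtot w v ≤ ∑ x ∈ Finset.univ, w x :=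
          Finset.sum_le_sum_of_subset_of_nonneg (Finset.filter_subset _ _)
            (fun x _ _ => (hw x).le)
      _ ≤ (Fintype.card X : ℝ) * wmax := by
          rw [← Finset.card_univ, ← nsmul_eq_mul]
          exact Finset.sum_le_card_nsmul _ _ _ (fun x _ => Finset.le_sup' w (Finset.mem_univ x))
  -- find the critical guess index
  have hex : ∃ j, alg2Guess w ε j < wtot w v := by
    obtain ⟨n, hn⟩ := exists_pow_lt_of_lt_one
      (div_pos hwv_pos (by positivity : (0:ℝ) < (Fintype.card X : ℝ) * wmax))
      (by linarith : 1 - ε < 1)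
    refine ⟨n, ?_⟩
    rw [alg2Guess, mul_assoc]
    calc (1-ε)^n * ((Fintype.card X : ℝ) * wmax)
        < wtot w v / ((Fintype.card X : ℝ) * wmax) * ((Fintype.card X : ℝ) * wmax) := by
          apply mul_lt_mul_of_pos_right hn (by positivity)
      _ = wtot w v := by field_simp
  set j0 := Nat.find hex with hj0def
  have hj0spec : alg2Guess w ε j0 < wtot w v := Nat.find_spec hex
  have hj0pos : j0 ≠ 0 := by
    intro h
    rw [h] at hj0spec
    linarith
  set js := j0 - 1 with hjsdef
  have hjs1 : js + 1 = j0 := Nat.succ_pred_eq_of_ne_zero hj0pos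
  have hjsge : wtot w v ≤ alg2Guess w ε js :=
    not_lt.mp (Nat.find_min hex (by omega))
  have hjslt : (1 - ε) * alg2Guess w ε js < wtot w v := by
    rw [← hlam_succ js, hjs1]; exact hj0spec
  -- js is within the guess bound
  have hjs_bound : (js : ℝ) ≤ alg2Bound w ε := by
    have h1 : wmin ≤ (1-ε)^js * (Fintype.card X : ℝ) * wmax := by
      rw [alg2Guess] at hjsge
      linarith
    have h2 : wmin / wmax / (Fintype.card X : ℝ) ≤ (1-ε)^js := by
      rw [div_div, div_le_iff₀ (by positivity)]
      calc wmin ≤ (1-ε)^js * (Fintype.card X : ℝ) * wmax := h1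
        _ = (1-ε)^js * (wmax * (Fintype.card X : ℝ)) := by ring
    have hlog : Real.log (wmin / wmax / (Fintype.card X : ℝ)) ≤ (js : ℝ) * Real.log (1-ε) := by
      calc Real.log (wmin / wmax / (Fintype.card X : ℝ))
          ≤ Real.log ((1-ε)^js) := Real.log_le_log (by positivity) h2
        _ = (js : ℝ) * Real.log (1-ε) := Real.log_pow (1-ε) js
    have hlogneg : Real.log (1-ε) < 0 := Real.log_neg (by linarith) (by linarith)
    rw [alg2Bound]
    exact (le_div_iff_of_neg hlogneg).mpr hlog
  -- the solution at js is good
  have hgood : (1 - ε) * τ / r ≤ g (alg2Sol g w τ ε cA order js) := by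
    rw [alg2Sol]
    exact alg1_value hsub hnorm hw hτ hε0 hε1 hps v hgv order hnd hfull
      (alg2Guess w ε js) (hlam0 js) hjsge
  set bd := alg2Bound w ε with hbddef
  have hbd0 : (0:ℝ) ≤ bd := le_trans (Nat.cast_nonneg js) hjs_bound
  -- candidate index set
  set T : Finset ℕ := (Finset.range (⌊bd⌋₊ + 1)).filter
    (fun j => (1 - ε) * τ / r ≤ g (alg2Sol g w τ ε cA order j)) with hTdef
  have hmemT : ∀ j : ℕ, j ∈ T ↔ ((j : ℝ) ≤ bd ∧
      (1 - ε) * τ / r ≤ g (alg2Sol g w τ ε cA order j)) := by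
    intro j
    rw [hTdef, Finset.mem_filter, Finset.mem_range, Nat.lt_succ_iff, Nat.le_floor_iff hbd0]
  have hjsT : js ∈ T := (hmemT js).mpr ⟨hjs_bound, hgood⟩
  obtain ⟨jm, hjmT, hjm_min⟩ := Finset.exists_min_image T
    (fun j => wtot w (alg2Sol g w τ ε cA order j)) ⟨js, hjsT⟩
  obtain ⟨hjm_bd, hjm_g⟩ := (hmemT jm).mp hjmT
  -- weight bound for any output
  have hwbound : ∀ x : KSet X k, IsAlg2Output g w τ ε cA r order x →
      wtot w x ≤ cA / (1 - ε) * wtot w v ∧ (1 - ε) * τ / r ≤ g x := by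
    rintro x ⟨j, hjbd, hgj, rfl, hmin⟩
    refine ⟨?_, hgj⟩
    have h1 : wtot w (alg2Sol g w τ ε cA order j) ≤ wtot w (alg2Sol g w τ ε cA order js) :=
      hmin js hjs_bound hgood
    have h2 : wtot w (alg2Sol g w τ ε cA order js) ≤ cA * alg2Guess w ε js := by
      rw [alg2Sol]
      exact alg1_weight_le hw (mul_nonneg hcA0.le (hlam0 js).le) order
    have h3 : cA * alg2Guess w ε js ≤ cA / (1 - ε) * wtot w v := by
      rw [div_mul_eq_mul_div, le_div_iff₀ (by linarith : (0:ℝ) < 1 - ε)]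
      calc cA * alg2Guess w ε js * (1 - ε) = cA * ((1 - ε) * alg2Guess w ε js) := by ring
        _ ≤ cA * wtot w v := by
            apply mul_le_mul_of_nonneg_left (le_of_lt hjslt) hcA0.le
    linarith
  refine ⟨⟨alg2Sol g w τ ε cA order jm, jm, hjm_bd, hjm_g, rfl, ?_⟩, hwbound⟩
  intro j' hj' hgj'
  exact hjm_min j' ((hmemT j').mpr ⟨hj', hgj'⟩)
end AuxMain
/-- **Theorem 2, approximation guarantee.** Let `v` be a
minimum-weight `k`-set among those with `g v ≥ τ`.  If `g` is monotone, any
output of Algorithm 2 satisfies `w(x) ≤ ((3-ε)/(2ε(1-ε)))·w(v)` and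
`g x ≥ (1-ε)τ/2`; if `k ≥ 2` (for `g` not assumed monotone), any output of
Algorithm 2 satisfies `w(x) ≤ ((4-ε)/(3ε(1-ε)))·w(v)` and `g x ≥ (1-ε)τ/3`. -/
theorem theorem2_guarantee {X : Type*} [Fintype X] [DecidableEq X] [Nonempty X]
    {k : ℕ} [NeZero k]
    (g : KSet X k → ℝ) (hnn : ∀ s : KSet X k, 0 ≤ g s) (hsub : KSubmodular g)
    (hnorm : g (KSet.bot X k) = 0)
    (w : X → ℝ) (hw : ∀ x, 0 < w x)
    (τ ε : ℝ) (hτ : 0 < τ) (hτle : ∃ s : KSet X k, τ ≤ g s)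
    (hε0 : 0 < ε) (hε1 : ε < 1)
    (v : KSet X k) (hgv : τ ≤ g v)
    (hvmin : ∀ u : KSet X k, τ ≤ g u → wtot w v ≤ wtot w u)
    (order : List X) (hnodup : order.Nodup) (hfull : ∀ x : X, x ∈ order) :
    (KMonotone g →
      (∃ x : KSet X k, IsAlg2Output g w τ ε ((3 - ε) / (2 * ε)) 2 order x) ∧
      ∀ x : KSet X k, IsAlg2Output g w τ ε ((3 - ε) / (2 * ε)) 2 order x →
        wtot w x ≤ (3 - ε) / (2 * ε * (1 - ε)) * wtot w v ∧
        (1 - ε) * τ / 2 ≤ g x) ∧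
    (2 ≤ k →
      (∃ x : KSet X k, IsAlg2Output g w τ ε ((4 - ε) / (3 * ε)) 3 order x) ∧
      ∀ x : KSet X k, IsAlg2Output g w τ ε ((4 - ε) / (3 * ε)) 3 order x →
        wtot w x ≤ (4 - ε) / (3 * ε * (1 - ε)) * wtot w v ∧
        (1 - ε) * τ / 3 ≤ g x) := by
  constructor
  · intro hmono
    have hps : (KMonotone g ∧ (2:ℝ) = 2 ∧ (3 - ε) / (2 * ε) = (3 - ε) / (2 * ε)) ∨
        (2 ≤ k ∧ (2:ℝ) = 3 ∧ (3 - ε) / (2 * ε) = (4 - ε) / (3 * ε)) :=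
      Or.inl ⟨hmono, rfl, rfl⟩
    obtain ⟨hex, hbound⟩ := alg2_main hsub hnorm hw hτ hε0 hε1 hps v hgv order hnodup hfull
    refine ⟨hex, fun x hx => ?_⟩
    obtain ⟨h1, h2⟩ := hbound x hx
    refine ⟨?_, h2⟩
    calc wtot w x ≤ (3 - ε) / (2 * ε) / (1 - ε) * wtot w v := h1
      _ = (3 - ε) / (2 * ε * (1 - ε)) * wtot w v := by rw [div_div]
  · intro hk
    have hps : (KMonotone g ∧ (3:ℝ) = 2 ∧ (4 - ε) / (3 * ε) = (3 - ε) / (2 * ε)) ∨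
        (2 ≤ k ∧ (3:ℝ) = 3 ∧ (4 - ε) / (3 * ε) = (4 - ε) / (3 * ε)) :=
      Or.inr ⟨hk, rfl, rfl⟩
    obtain ⟨hex, hbound⟩ := alg2_main hsub hnorm hw hτ hε0 hε1 hps v hgv order hnodup hfull
    refine ⟨hex, fun x hx => ?_⟩
    obtain ⟨h1, h2⟩ := hbound x hx
    refine ⟨?_, h2⟩
    calc wtot w x ≤ (4 - ε) / (3 * ε) / (1 - ε) * wtot w v := h1
      _ = (4 - ε) / (3 * ε * (1 - ε)) * wtot w v := by rw [div_div]
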